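/- Let x* = −G·(b₁; b₂). Then x* is feasible for the linear equality constraint, i.e., B·x* + b₂ = 0. -/

import Mathlib

open Matrix

/-- Feasibility of the constrained least-squares solution `x* = -G·(b₁; b₂)`:
it satisfies the linear equality constraint `B·x* + b₂ = 0`. -/
theorem feasibility_of_condensed_solution
    (n N r : ℕ) (hn : 0 < n) (hN : 0 < N) (hr : 0 < r)
    (A : Matrix (Fin N) (Fin n) ℝ) (B : Matrix (Fin r) (Fin n) ℝ)
    (M : Matrix (Fin n ⊕ Fin r) (Fin n ⊕ Fin r) ℝ)
    (hM : M = Matrix.fromBlocks (Aᵀ * A) Bᵀ B 0)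
    (hMinv : IsUnit M)
    (G : Matrix (Fin n) (Fin N ⊕ Fin r) ℝ)
    (hG : G = Matrix.fromCols (1 : Matrix (Fin n) (Fin n) ℝ) (0 : Matrix (Fin n) (Fin r) ℝ) * M⁻¹ *
        Matrix.fromBlocks Aᵀ 0 0 (1 : Matrix (Fin r) (Fin r) ℝ))
    (b₁ : Fin N → ℝ) (b₂ : Fin r → ℝ)
    (xstar : Fin n → ℝ) (hx : xstar = -(G.mulVec (Sum.elim b₁ b₂))) :
    B.mulVec xstar + b₂ = 0 := by
  set c : (Fin n ⊕ Fin r) → ℝ := Sum.elim (Aᵀ.mulVec b₁) b₂ with hc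
  set y : (Fin n ⊕ Fin r) → ℝ := M⁻¹.mulVec c with hy
  have hMy : M.mulVec y = c := by
    rw [hy, mulVec_mulVec, Matrix.mul_nonsing_inv _ ((Matrix.isUnit_iff_isUnit_det M).mp hMinv),
      one_mulVec]
  have hBy : B.mulVec (y ∘ Sum.inl) = b₂ := by
    have h2 : M.mulVec (Sum.elim (y ∘ Sum.inl) (y ∘ Sum.inr)) = c := by
      rwa [Sum.elim_comp_inl_inr]
    rw [hM, fromBlocks_mulVec] at h2
    have := congrArg (fun f => f ∘ Sum.inr) h2
    simp only [Sum.elim_comp_inr, hc, zero_mulVec, add_zero] at this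
    exact this
  have hxl : xstar = -(y ∘ Sum.inl) := by
    rw [hx, hG]
    congr 1
    rw [← mulVec_mulVec, ← mulVec_mulVec]
    have h1 : (Matrix.fromBlocks Aᵀ 0 0 (1 : Matrix (Fin r) (Fin r) ℝ)).mulVec
        (Sum.elim b₁ b₂) = c := by
      rw [fromBlocks_mulVec]
      simp [hc]
    rw [h1, ← hy, ← Sum.elim_comp_inl_inr y, fromCols_mulVec_sumElim]
    simp
  rw [hxl, mulVec_neg, hBy, neg_add_cancel]
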